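/- Fix real q > 1 and real u with 0 < u < 1. For a partition λ with |λ| > 0 and s ≥ 1, let λ^{(s)} denote the shape obtained from λ by decreasing the size of column s by one box, and set M_{u,q}(λ^{(s)}) = 0 whenever λ^{(s)} is not a partition. Then (1/q^{λ'_1 − 1}) · M_{u,q}(λ^{(1)}) + Σ_{s=2}^{λ_1} (1/q^{λ'_s − 1} − 1/q^{λ'_{s−1}}) · M_{u,q}(λ^{(s)}) = N_{u,q}(λ). -/

import Mathlib

/-- `(x/q)_i = ∏_{j=1}^i (1 - x/q^j)`. -/
noncomputable def poch (x q : ℝ) (i : ℕ) : ℝ := ∏ j ∈ Finset.Icc 1 i, (1 - x / q ^ j)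

/-- The `i`-th column length `λ'_i` of the partition whose multiset of parts is `m`:
the number of parts of size at least `i` (so `λ'_i = 0` for `i > λ_1`). -/
def col (m : Multiset ℕ) (i : ℕ) : ℕ := (m.filter (fun p => i ≤ p)).card

/-- The measure `M_{u,q}` on partitions (a partition is encoded by its multiset of parts). -/
noncomputable def Mmeas (u q : ℝ) (m : Multiset ℕ) : ℝ :=
  (∏' r : ℕ, (1 - u / q ^ (r + 1))) * u ^ m.sum /
    ∏ i ∈ Finset.Icc 1 m.sum, (q ^ ((col m i) ^ 2) * poch 1 q (m.count i))

/-- The measure `N_{u,q}` on partitions. -/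
noncomputable def Nmeas (u q : ℝ) (m : Multiset ℕ) : ℝ :=
  (∏' r : ℕ, (1 - u / q ^ (r + 1))) * u ^ (m.sum - 1) * (q ^ col m 1 - 1) /
    ∏ i ∈ Finset.Icc 1 m.sum, (q ^ ((col m i) ^ 2) * poch 1 q (m.count i))

/-- The multiset of parts of `λ^{(s)}`, the shape obtained from `λ` by decreasing column `s`
by one box: one part of size `s` is replaced by a part of size `s - 1` (deleted if `s = 1`).
This is a partition exactly when `λ` has a part of size `s`. -/
def removeBox (m : Multiset ℕ) (s : ℕ) : Multiset ℕ :=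
  ((m.erase s) + {s - 1}).filter (fun p => 0 < p)

/-- `M_{u,q}(λ^{(s)})`, set to `0` when `λ^{(s)}` is not a partition
(i.e. when `λ` has no part of size `s`). -/
noncomputable def MmeasRemoved (u q : ℝ) (m : Multiset ℕ) (s : ℕ) : ℝ :=
  if s ∈ m then Mmeas u q (removeBox m s) else 0

lemma poch_pos {q : ℝ} (hq : 1 < q) (k : ℕ) : 0 < poch 1 q k := by
  unfold poch
  apply Finset.prod_pos
  intro j hj
  have hj1 : 1 ≤ j := (Finset.mem_Icc.mp hj).1
  have hqj : (1:ℝ) < q ^ j := one_lt_pow₀ hq (by omega)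
  have h2 : (1:ℝ) / q ^ j < 1 := by rw [div_lt_one (by linarith)]; exact hqj
  linarith

lemma poch_succ (x q : ℝ) (k : ℕ) : poch x q (k+1) = poch x q k * (1 - x / q ^ (k+1)) := by
  unfold poch
  rw [Finset.prod_Icc_succ_top (by omega)]

lemma col_eq (m : Multiset ℕ) (i : ℕ) : col m i = col m (i+1) + m.count i := by
  unfold col
  induction m using Multiset.induction with
  | empty => simp
  | cons a t ih =>
    simp only [Multiset.filter_cons, Multiset.count_cons, Multiset.card_add]
    split_ifs <;> simp_all <;> omega

lemma col_eq_zero (m : Multiset ℕ) (i : ℕ) (hi : m.sum < i) : col m i = 0 := by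
  unfold col
  rw [Multiset.card_eq_zero, Multiset.filter_eq_nil]
  intro a ha h
  exact absurd (Multiset.le_sum_of_mem ha) (by omega)

lemma count_eq_zero (m : Multiset ℕ) (i : ℕ) (hi : m.sum < i) : m.count i = 0 := by
  rw [Multiset.count_eq_zero]
  intro ha
  exact absurd (Multiset.le_sum_of_mem ha) (by omega)

lemma col_pos (m : Multiset ℕ) (s : ℕ) (hs : s ∈ m) : 0 < col m s := by
  unfold col
  exact Multiset.card_pos_iff_exists_mem.mpr ⟨s, Multiset.mem_filter.mpr ⟨hs, le_refl s⟩⟩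

lemma removeBox_count (m : Multiset ℕ) (s i : ℕ) (hi : 0 < i) :
    (removeBox m s).count i = (m.erase s).count i + (if i = s - 1 then 1 else 0) := by
  unfold removeBox
  rw [Multiset.count_filter, if_pos hi, Multiset.count_add]
  congr 1
  simp [Multiset.count_singleton]

lemma removeBox_sum (m : Multiset ℕ) (s : ℕ) (hs : s ∈ m) (hs0 : 0 < s) :
    (removeBox m s).sum + 1 = m.sum := by
  unfold removeBox
  have h1 : ((m.erase s) + ({s - 1} : Multiset ℕ)).sum
      = (((m.erase s) + ({s-1} : Multiset ℕ)).filter (fun p => 0 < p)).sum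
        + (((m.erase s) + ({s-1} : Multiset ℕ)).filter (fun p => ¬ 0 < p)).sum := by
    conv_lhs => rw [← Multiset.filter_add_not (fun p => 0 < p) ((m.erase s) + ({s-1} : Multiset ℕ))]
    rw [Multiset.sum_add]
  have h2 : (((m.erase s) + ({s-1} : Multiset ℕ)).filter (fun p => ¬ 0 < p)).sum = 0 := by
    apply Multiset.sum_eq_zero
    intro x hx
    have := Multiset.of_mem_filter hx
    omega
  have h3 : ((m.erase s) + ({s - 1} : Multiset ℕ)).sum = (m.erase s).sum + (s - 1) := by
    rw [Multiset.sum_add, Multiset.sum_singleton]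
  have h4 : (m.erase s).sum + s = m.sum := by
    conv_rhs => rw [← Multiset.cons_erase hs]
    rw [Multiset.sum_cons]; omega
  omega

lemma col_filter_pos (M : Multiset ℕ) (i : ℕ) (hi : 0 < i) :
    col (M.filter (fun p => 0 < p)) i = col M i := by
  unfold col
  rw [Multiset.filter_filter]
  congr 1
  apply Multiset.filter_congr
  intro x _
  constructor
  · exact fun h => h.1
  · exact fun h => ⟨h, by omega⟩

lemma removeBox_col (m : Multiset ℕ) (s i : ℕ) (hs : s ∈ m) (hi : 0 < i) :
    col (removeBox m s) i + (if i ≤ s then 1 else 0)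
      = col m i + (if i ≤ s - 1 then 1 else 0) := by
  unfold removeBox
  rw [col_filter_pos _ _ hi]
  have h1 : col (m.erase s + {s-1}) i = col (m.erase s) i + col ({s-1} : Multiset ℕ) i := by
    unfold col; rw [Multiset.filter_add, Multiset.card_add]
  have h2 : col ({s-1} : Multiset ℕ) i = if i ≤ s - 1 then 1 else 0 := by
    unfold col
    rw [Multiset.filter_singleton]
    split_ifs with h
    · simp
    · simp
  have h3 : col m i = col (m.erase s) i + (if i ≤ s then 1 else 0) := by
    conv_lhs => rw [← Multiset.cons_erase hs]
    unfold col
    rw [Multiset.filter_cons]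
    split_ifs with h
    · simp
    · simp
  omega

lemma removeBox_col_ne (m : Multiset ℕ) (s i : ℕ) (hs : s ∈ m) (hi : 0 < i) (hne : i ≠ s) :
    col (removeBox m s) i = col m i := by
  have h := removeBox_col m s i hs hi
  split_ifs at h <;> omega

lemma removeBox_col_self (m : Multiset ℕ) (s : ℕ) (hs : s ∈ m) (hs0 : 0 < s) :
    col (removeBox m s) s + 1 = col m s := by
  have h := removeBox_col m s s hs hs0
  split_ifs at h <;> omega

lemma removeBox_count_ne (m : Multiset ℕ) (s i : ℕ) (hi : 0 < i) (hne : i ≠ s)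
    (hne' : i ≠ s - 1) : (removeBox m s).count i = m.count i := by
  rw [removeBox_count m s i hi, if_neg hne', Multiset.count_erase_of_ne hne, Nat.add_zero]

lemma removeBox_count_self (m : Multiset ℕ) (s : ℕ) (hs : s ∈ m) (hs0 : 0 < s) :
    (removeBox m s).count s + 1 = m.count s := by
  rw [removeBox_count m s s hs0, if_neg (by omega), Multiset.count_erase_self]
  have : 1 ≤ m.count s := Multiset.one_le_count_iff_mem.mpr hs
  omega

lemma removeBox_count_pred (m : Multiset ℕ) (s : ℕ) (hs2 : 2 ≤ s) :
    (removeBox m s).count (s-1) = m.count (s-1) + 1 := by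
  rw [removeBox_count m s (s-1) (by omega), if_pos rfl,
    Multiset.count_erase_of_ne (by omega)]

noncomputable def Dfun (q : ℝ) (m : Multiset ℕ) (N : ℕ) : ℝ :=
  ∏ i ∈ Finset.Icc 1 N, (q ^ ((col m i) ^ 2) * poch 1 q (m.count i))

lemma Dfun_pos {q : ℝ} (hq : 1 < q) (m : Multiset ℕ) (N : ℕ) : 0 < Dfun q m N := by
  apply Finset.prod_pos
  intro i _
  exact mul_pos (pow_pos (by linarith) _) (poch_pos hq _)

lemma Dfun_ext {q : ℝ} (m : Multiset ℕ) {N : ℕ} (hN : m.sum ≤ N) :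
    Dfun q m N = Dfun q m m.sum := by
  unfold Dfun
  symm
  apply Finset.prod_subset
  · intro x hx
    simp only [Finset.mem_Icc] at *
    omega
  · intro x hx hx'
    simp only [Finset.mem_Icc] at hx hx'
    have hgt : m.sum < x := by omega
    rw [col_eq_zero m x hgt, count_eq_zero m x hgt]
    simp [poch]

lemma Mmeas_eq (u q : ℝ) (m : Multiset ℕ) {N : ℕ} (hN : m.sum ≤ N) :
    Mmeas u q m = (∏' r : ℕ, (1 - u / q ^ (r + 1))) * u ^ m.sum / Dfun q m N := by
  rw [Dfun_ext m hN]; rfl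

set_option maxHeartbeats 2000000 in

lemma key2 (q u : ℝ) (hq : 1 < q) (hu : 0 < u) (m : Multiset ℕ)
    (s : ℕ) (hs2 : 2 ≤ s) (hs : s ∈ m) :
    (q / q ^ col m s - 1 / q ^ col m (s-1)) * Mmeas u q (removeBox m s)
      = Mmeas u q m / u * (q ^ col m s - q ^ col m (s+1)) := by
  have hq0 : (0:ℝ) < q := by linarith
  set n := m.sum with hn
  have hsn : s ≤ n := Multiset.le_sum_of_mem hs
  have hrb_sum : (removeBox m s).sum + 1 = n := removeBox_sum m s hs (by omega)
  set n0 := (removeBox m s).sum with hn0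
  have hM : Mmeas u q m = (∏' r : ℕ, (1 - u / q ^ (r + 1))) * u ^ n / Dfun q m n :=
    Mmeas_eq u q m (le_refl _)
  have hM' : Mmeas u q (removeBox m s)
      = (∏' r : ℕ, (1 - u / q ^ (r + 1))) * u ^ n0 / Dfun q (removeBox m s) n :=
    Mmeas_eq u q (removeBox m s) (by omega)
  have hs_mem : s ∈ Finset.Icc 1 n := by simp; omega
  have hs1_mem : s - 1 ∈ (Finset.Icc 1 n).erase s := by
    simp only [Finset.mem_erase, Finset.mem_Icc]; omega
  set R := ∏ i ∈ ((Finset.Icc 1 n).erase s).erase (s-1),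
      (q ^ ((col m i)^2) * poch 1 q (m.count i)) with hRdef
  have hRsplit : Dfun q m n = (q^((col m s)^2) * poch 1 q (m.count s)) *
      ((q^((col m (s-1))^2) * poch 1 q (m.count (s-1))) * R) := by
    rw [Dfun, ← Finset.mul_prod_erase _ _ hs_mem, ← Finset.mul_prod_erase _ _ hs1_mem]
  have hRsplit' : Dfun q (removeBox m s) n
      = (q^((col (removeBox m s) s)^2) * poch 1 q ((removeBox m s).count s)) *
        ((q^((col m (s-1))^2) * poch 1 q (m.count (s-1) + 1)) * R) := by
    rw [Dfun, ← Finset.mul_prod_erase _ _ hs_mem, ← Finset.mul_prod_erase _ _ hs1_mem]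
    congr 2
    · rw [removeBox_col_ne m s (s-1) hs (by omega) (by omega),
        removeBox_count_pred m s hs2]
    · apply Finset.prod_congr rfl
      intro i hi
      simp only [Finset.mem_erase, Finset.mem_Icc] at hi
      rw [removeBox_col_ne m s i hs (by omega) hi.2.1,
        removeBox_count_ne m s i (by omega) hi.2.1 hi.1]
  obtain ⟨a0, ha0⟩ : ∃ a0, col m s = a0 + 1 := by
    have := col_pos m s hs; exact ⟨col m s - 1, by omega⟩
  obtain ⟨c0, hc0⟩ : ∃ c0, m.count s = c0 + 1 := by
    have := Multiset.one_le_count_iff_mem.mpr hs; exact ⟨m.count s - 1, by omega⟩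
  have hcolrb : col (removeBox m s) s = a0 := by
    have := removeBox_col_self m s hs (by omega); omega
  have hcntrb : (removeBox m s).count s = c0 := by
    have := removeBox_count_self m s hs (by omega); omega
  have hb : col m (s-1) = col m s + m.count (s-1) := by
    have h := col_eq m (s-1)
    rwa [show s - 1 + 1 = s by omega] at h
  have ha' : a0 = col m (s+1) + c0 := by
    have h := col_eq m s
    omega
  set d := m.count (s-1) with hd
  set a' := col m (s+1) with ha'd
  rw [hM, hM', hRsplit, hRsplit', hcolrb, hcntrb, ha0, hc0]
  rw [poch_succ 1 q c0, poch_succ 1 q d]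
  have e1 : q ^ ((a0+1)^2) = q^(a0^2) * (q^a0 * q^a0 * q) := by
    rw [show (a0+1)^2 = a0^2 + (a0 + a0 + 1) by ring, pow_add, pow_add, pow_add, pow_one]
  have e2 : q ^ (a0+1) = q^a0 * q := by rw [pow_succ]
  have e3 : col m (s-1) = a0 + 1 + d := by omega
  have e4 : q ^ (a0+1+d) = q^a0 * q * q^d := by rw [pow_add, pow_succ]
  have e5 : q ^ a0 = q ^ a' * q ^ c0 := by rw [← pow_add, ← ha']
  have e6 : u ^ n = u ^ n0 * u := by rw [← hrb_sum, pow_succ]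
  have e7 : q ^ (c0+1) = q ^ c0 * q := by rw [pow_succ]
  have e8 : q ^ (d+1) = q ^ d * q := by rw [pow_succ]
  rw [e1, e2, e3, e4, e5, e6, e7, e8]
  -- nonzeroness
  have hP : 0 < poch 1 q c0 := poch_pos hq c0
  have hQ : 0 < poch 1 q d := poch_pos hq d
  have hR : 0 < R := by
    apply Finset.prod_pos
    intro i _
    exact mul_pos (pow_pos hq0 _) (poch_pos hq _)
  have hX : (0:ℝ) < q ^ (a0^2) := pow_pos hq0 _
  have hB : (0:ℝ) < q ^ ((a0+1+d)^2) := pow_pos hq0 _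
  have hA' : (0:ℝ) < q ^ a' := pow_pos hq0 _
  have hCq : (0:ℝ) < q ^ c0 := pow_pos hq0 _
  have hDq : (0:ℝ) < q ^ d := pow_pos hq0 _
  have h1c : (1:ℝ) - 1 / (q ^ c0 * q) ≠ 0 := by
    have h := one_lt_pow₀ hq (n := c0 + 1) (by omega)
    rw [pow_succ] at h
    have : 1 / (q^c0 * q) < 1 := by rw [div_lt_one (by linarith)]; exact h
    linarith
  have h1d : (1:ℝ) - 1 / (q ^ d * q) ≠ 0 := by
    have h := one_lt_pow₀ hq (n := d + 1) (by omega)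
    rw [pow_succ] at h
    have : 1 / (q^d * q) < 1 := by rw [div_lt_one (by linarith)]; exact h
    linarith
  have hpc : (1:ℝ) ≤ q ^ c0 := one_le_pow₀ (le_of_lt hq)
  have hpd : (1:ℝ) ≤ q ^ d := one_le_pow₀ (le_of_lt hq)
  have hc1 : q * q ^ c0 - 1 ≠ 0 := by nlinarith
  have hc2 : -1 + q * q ^ c0 ≠ 0 := by nlinarith
  have hd1 : q * q ^ d - 1 ≠ 0 := by nlinarith
  have hd2 : -1 + q * q ^ d ≠ 0 := by nlinarith
  have hc3 : (0:ℝ) < -1 + q * q ^ c0 := by nlinarith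
  have hd3 : (0:ℝ) < -1 + q * q ^ d := by nlinarith
  field_simp

set_option maxHeartbeats 2000000 in

lemma key1 (q u : ℝ) (hq : 1 < q) (hu : 0 < u) (m : Multiset ℕ)
    (hs : 1 ∈ m) :
    (q / q ^ col m 1) * Mmeas u q (removeBox m 1)
      = Mmeas u q m / u * (q ^ col m 1 - q ^ col m 2) := by
  have hq0 : (0:ℝ) < q := by linarith
  set n := m.sum with hn
  have hsn : 1 ≤ n := Multiset.le_sum_of_mem hs
  have hrb_sum : (removeBox m 1).sum + 1 = n := removeBox_sum m 1 hs (by omega)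
  set n0 := (removeBox m 1).sum with hn0
  have hM : Mmeas u q m = (∏' r : ℕ, (1 - u / q ^ (r + 1))) * u ^ n / Dfun q m n :=
    Mmeas_eq u q m (le_refl _)
  have hM' : Mmeas u q (removeBox m 1)
      = (∏' r : ℕ, (1 - u / q ^ (r + 1))) * u ^ n0 / Dfun q (removeBox m 1) n :=
    Mmeas_eq u q (removeBox m 1) (by omega)
  have hs_mem : (1:ℕ) ∈ Finset.Icc 1 n := by simp; omega
  set R := ∏ i ∈ (Finset.Icc 1 n).erase 1,
      (q ^ ((col m i)^2) * poch 1 q (m.count i)) with hRdef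
  have hRsplit : Dfun q m n = (q^((col m 1)^2) * poch 1 q (m.count 1)) * R := by
    rw [Dfun, ← Finset.mul_prod_erase _ _ hs_mem]
  have hRsplit' : Dfun q (removeBox m 1) n
      = (q^((col (removeBox m 1) 1)^2) * poch 1 q ((removeBox m 1).count 1)) * R := by
    rw [Dfun, ← Finset.mul_prod_erase _ _ hs_mem]
    congr 1
    apply Finset.prod_congr rfl
    intro i hi
    simp only [Finset.mem_erase, Finset.mem_Icc] at hi
    rw [removeBox_col_ne m 1 i hs (by omega) hi.1,
      removeBox_count_ne m 1 i (by omega) hi.1 (by omega)]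
  obtain ⟨a0, ha0⟩ : ∃ a0, col m 1 = a0 + 1 := by
    have := col_pos m 1 hs; exact ⟨col m 1 - 1, by omega⟩
  obtain ⟨c0, hc0⟩ : ∃ c0, m.count 1 = c0 + 1 := by
    have := Multiset.one_le_count_iff_mem.mpr hs; exact ⟨m.count 1 - 1, by omega⟩
  have hcolrb : col (removeBox m 1) 1 = a0 := by
    have := removeBox_col_self m 1 hs (by omega); omega
  have hcntrb : (removeBox m 1).count 1 = c0 := by
    have := removeBox_count_self m 1 hs (by omega); omega
  have ha' : a0 = col m 2 + c0 := by
    have h := col_eq m 1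
    norm_num at h
    omega
  set a' := col m 2 with ha'd
  rw [hM, hM', hRsplit, hRsplit', hcolrb, hcntrb, ha0, hc0]
  rw [poch_succ 1 q c0]
  have e1 : q ^ ((a0+1)^2) = q^(a0^2) * (q^a0 * q^a0 * q) := by
    rw [show (a0+1)^2 = a0^2 + (a0 + a0 + 1) by ring, pow_add, pow_add, pow_add, pow_one]
  have e2 : q ^ (a0+1) = q^a0 * q := by rw [pow_succ]
  have e5 : q ^ a0 = q ^ a' * q ^ c0 := by rw [← pow_add, ← ha']
  have e6 : u ^ n = u ^ n0 * u := by rw [← hrb_sum, pow_succ]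
  have e7 : q ^ (c0+1) = q ^ c0 * q := by rw [pow_succ]
  rw [e1, e2, e5, e6, e7]
  have hP : 0 < poch 1 q c0 := poch_pos hq c0
  have hR : 0 < R := by
    apply Finset.prod_pos
    intro i _
    exact mul_pos (pow_pos hq0 _) (poch_pos hq _)
  have hX : (0:ℝ) < q ^ (a0^2) := pow_pos hq0 _
  have hA' : (0:ℝ) < q ^ a' := pow_pos hq0 _
  have hCq : (0:ℝ) < q ^ c0 := pow_pos hq0 _
  have hpc : (1:ℝ) ≤ q ^ c0 := one_le_pow₀ (le_of_lt hq)
  have hc1 : q * q ^ c0 - 1 ≠ 0 := by nlinarith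
  have hc2 : -1 + q * q ^ c0 ≠ 0 := by nlinarith
  have hc3 : (0:ℝ) < -1 + q * q ^ c0 := by nlinarith
  have hc4 : q ^ c0 * q - 1 ≠ 0 := by nlinarith
  field_simp

lemma tele_sum (f : ℕ → ℝ) : ∀ n, ∑ s ∈ Finset.Icc 1 n, (f s - f (s+1)) = f 1 - f (n+1)
  | 0 => by simp
  | n+1 => by rw [Finset.sum_Icc_succ_top (by omega), tele_sum f n]; ring

/-- For any partition `λ` with `|λ| > 0`:
`(1/q^{λ'_1 - 1}) M_{u,q}(λ^{(1)}) + Σ_{s≥2} (1/q^{λ'_s - 1} - 1/q^{λ'_{s-1}}) M_{u,q}(λ^{(s)})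
  = N_{u,q}(λ)`.
Here `1/q^{λ'_s - 1}` is written as `q / q^{λ'_s}`, and the sum runs over `2 ≤ s ≤ |λ|`,
which includes all `s ≤ λ_1`; the extra terms vanish since `M_{u,q}(λ^{(s)}) = 0` there. -/
theorem affine_young_tableau_step (q u : ℝ) (hq : 1 < q) (hu0 : 0 < u) (hu1 : u < 1)
    (m : Multiset ℕ) (hpos : ∀ x ∈ m, 0 < x) (hne : m ≠ 0) :
    (q / q ^ col m 1) * MmeasRemoved u q m 1 +
      ∑ s ∈ Finset.Icc 2 m.sum,
        (q / q ^ col m s - 1 / q ^ col m (s - 1)) * MmeasRemoved u q m s =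
    Nmeas u q m := by
  classical
  set n := m.sum with hn
  have hn1 : 1 ≤ n := by
    obtain ⟨x, hx⟩ := Multiset.exists_mem_of_ne_zero hne
    have h1 := hpos x hx
    have h2 := Multiset.le_sum_of_mem hx
    omega
  have hnotin : ∀ s, s ∉ m → Mmeas u q m / u * (q ^ col m s - q ^ col m (s+1)) = 0 := by
    intro s hs
    have h := col_eq m s
    rw [Multiset.count_eq_zero_of_notMem hs] at h
    rw [show col m s = col m (s+1) by omega]
    ring
  have h1 : (q / q ^ col m 1) * MmeasRemoved u q m 1
      = Mmeas u q m / u * (q ^ col m 1 - q ^ col m 2) := by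
    by_cases h : 1 ∈ m
    · simp only [MmeasRemoved, if_pos h]
      exact key1 q u hq hu0 m h
    · simp only [MmeasRemoved, if_neg h, mul_zero]
      exact (hnotin 1 h).symm
  have h2 : ∀ s ∈ Finset.Icc 2 n,
      (q / q ^ col m s - 1 / q ^ col m (s - 1)) * MmeasRemoved u q m s
        = Mmeas u q m / u * (q ^ col m s - q ^ col m (s+1)) := by
    intro s hsi
    simp only [Finset.mem_Icc] at hsi
    by_cases h : s ∈ m
    · simp only [MmeasRemoved, if_pos h]
      exact key2 q u hq hu0 m s hsi.1 h
    · simp only [MmeasRemoved, if_neg h, mul_zero]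
      exact (hnotin s h).symm
  rw [h1, Finset.sum_congr rfl h2]
  have hins : Finset.Icc 1 n = insert 1 (Finset.Icc 2 n) := by
    ext x
    simp only [Finset.mem_Icc, Finset.mem_insert]
    omega
  have hsum : Mmeas u q m / u * (q ^ col m 1 - q ^ col m 2)
      + ∑ s ∈ Finset.Icc 2 n, Mmeas u q m / u * (q ^ col m s - q ^ col m (s+1))
      = ∑ s ∈ Finset.Icc 1 n, (Mmeas u q m / u * (q ^ col m s - q ^ col m (s+1))) := by
    rw [hins, Finset.sum_insert (by simp)]
  rw [hsum]
  have ht : ∑ s ∈ Finset.Icc 1 n, ((q:ℝ) ^ col m s - q ^ col m (s+1))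
      = q ^ col m 1 - q ^ col m (n+1) := tele_sum (fun t => (q:ℝ) ^ col m t) n
  rw [← Finset.mul_sum, ht, col_eq_zero m (n+1) (by omega), pow_zero]
  have hD : (0:ℝ) < ∏ i ∈ Finset.Icc 1 m.sum, (q ^ ((col m i) ^ 2) * poch 1 q (m.count i)) := by
    have := Dfun_pos hq m m.sum
    rwa [Dfun] at this
  have hD' : (∏ i ∈ Finset.Icc 1 m.sum, (q ^ ((col m i) ^ 2) * poch 1 q (m.count i))) ≠ 0 :=
    ne_of_gt hD
  have hu' : u ≠ 0 := ne_of_gt hu0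
  have e6 : u ^ m.sum = u ^ (m.sum - 1) * u := by
    rw [← pow_succ]
    congr 1
    omega
  rw [Mmeas, Nmeas, e6]
  field_simp
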